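/- Let X be a proper geodesic metric space, D ≥ 0, let γ : [a,b] → X be a D-contracting geodesic, set δ = 7D + 1, and let σ be a subsegment of γ. Suppose z ∈ X satisfies π_{im γ}(z) ∩ im σ ≠ ∅, and let B be a closed metric ball centered at z that is disjoint from the image of σ. Then diam(π_{im σ}(B)) ≤ D + 4δ. -/

import Mathlib

/-! Geodesics, quasi-geodesics, projections, contracting and super-contracting
geodesics, and Morse geodesics in a metric space. -/

open Metric Set

section Defs

variable {X : Type*} [MetricSpace X]

/-- `γ` is a geodesic parametrized by `[a,b]`:
`dist (γ s) (γ t) = |s - t|` for all `s, t ∈ [a,b]`. -/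
def IsGeodesicOn (γ : ℝ → X) (a b : ℝ) : Prop :=
  ∀ s ∈ Icc a b, ∀ t ∈ Icc a b, dist (γ s) (γ t) = |s - t|

/-- `X` is a geodesic metric space: every two points are joined by a geodesic. -/
def GeodesicSpace (X : Type*) [MetricSpace X] : Prop :=
  ∀ x y : X, ∃ γ : ℝ → X, IsGeodesicOn γ 0 (dist x y) ∧ γ 0 = x ∧ γ (dist x y) = y

/-- `σ` is a `(lam, eps)`-quasi-geodesic parametrized by `[a,b]`. -/
def IsQuasiGeodesicOn (σ : ℝ → X) (a b lam eps : ℝ) : Prop :=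
  ∀ s ∈ Icc a b, ∀ t ∈ Icc a b,
    (1 / lam) * |s - t| - eps ≤ dist (σ s) (σ t) ∧
      dist (σ s) (σ t) ≤ lam * |s - t| + eps

/-- The projection `π_C(x)`: points of `C` realizing `infDist x C`. -/
def projPt (C : Set X) (x : X) : Set X :=
  {p ∈ C | dist x p = infDist x C}

/-- The map `γ` (with parameter interval `[a,b]`) is `D`-contracting: for any
closed ball `B` disjoint from the image of `γ`, the projection `π_{im γ}(B)`
has diameter at most `D`. -/
def ContractingOn (γ : ℝ → X) (a b D : ℝ) : Prop :=
  ∀ (z : X) (r : ℝ), Disjoint (closedBall z r) (γ '' Icc a b) →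
    ∀ x ∈ closedBall z r, ∀ y ∈ closedBall z r,
      ∀ p ∈ projPt (γ '' Icc a b) x, ∀ q ∈ projPt (γ '' Icc a b) y,
        dist p q ≤ D

/-- `γ` (with parameter interval `[a,b]`) is `D`-super-contracting: every
subsegment of `γ` is `D`-contracting. -/
def SuperContractingOn (γ : ℝ → X) (a b D : ℝ) : Prop :=
  ∀ s t : ℝ, a ≤ s → s ≤ t → t ≤ b → ContractingOn γ s t D

/-- `γ` (with parameter interval `[a,b]`) is `N`-Morse: every
`(lam, eps)`-quasi-geodesic with endpoints on the image of `γ` stays within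
distance `N lam eps` of the image of `γ`. -/
def MorseOn (γ : ℝ → X) (a b : ℝ) (N : ℝ → ℝ → ℝ) : Prop :=
  ∀ lam eps : ℝ, 1 ≤ lam → 0 ≤ eps →
    ∀ (σ : ℝ → X) (c d : ℝ), c ≤ d → IsQuasiGeodesicOn σ c d lam eps →
      σ c ∈ γ '' Icc a b → σ d ∈ γ '' Icc a b →
        ∀ s ∈ Icc c d, infDist (σ s) (γ '' Icc a b) ≤ N lam eps

end Defs


private lemma almost_proj {X : Type} [MetricSpace X] (hgeo : GeodesicSpace X)
    (D : ℝ) (Γ : Set X) (hΓc : IsCompact Γ)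
    (hcon : ∀ (c : X) (ρ : ℝ), Disjoint (Metric.closedBall c ρ) Γ →
      ∀ x ∈ Metric.closedBall c ρ, ∀ y ∈ Metric.closedBall c ρ,
        ∀ p ∈ projPt Γ x, ∀ q ∈ projPt Γ y, dist p q ≤ D)
    (x : X) (hx : x ∉ Γ) (q : X) (hq : q ∈ Γ) (C : ℝ)
    (hC : dist x q ≤ infDist x Γ + C)
    (p' : X) (hp' : p' ∈ projPt Γ x) :
    dist p' q ≤ D + 2 * C + 2 := by
  set d := infDist x Γ with hd
  have hd0 : 0 < d := (hΓc.isClosed.notMem_iff_infDist_pos ⟨q, hq⟩).mp hx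
  set ε : ℝ := min (d / 2) 1 with hε
  have hε0 : 0 < ε := lt_min (by linarith) one_pos
  have hε1 : ε ≤ 1 := min_le_right _ _
  have hεd : ε ≤ d / 2 := min_le_left _ _
  have hdL : d ≤ dist x q := infDist_le_dist_of_mem hq
  obtain ⟨η, hη, hη0, hηL⟩ := hgeo x q
  set L := dist x q with hL
  have hL0 : 0 ≤ L := dist_nonneg
  have hmem : d - ε ∈ Icc (0:ℝ) L := ⟨by linarith, by linarith⟩
  have h0mem : (0:ℝ) ∈ Icc (0:ℝ) L := ⟨le_refl _, hL0⟩
  have hLmem : L ∈ Icc (0:ℝ) L := ⟨hL0, le_refl _⟩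
  set y := η (d - ε) with hy
  have hxy : dist x y = d - ε := by
    have h := hη 0 h0mem (d - ε) hmem
    rw [hη0] at h
    rw [h, abs_of_nonpos (by linarith)]
    ring
  have hyq : dist y q = L - (d - ε) := by
    have h := hη (d - ε) hmem L hLmem
    rw [hηL] at h
    rw [h, abs_of_nonpos (by linarith)]
    ring
  have hdisj : Disjoint (Metric.closedBall x (d - ε)) Γ := by
    rw [Set.disjoint_left]
    intro c hc hcΓ
    have h1 : d ≤ dist x c := infDist_le_dist_of_mem hcΓ
    have h2 : dist c x ≤ d - ε := Metric.mem_closedBall.mp hc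
    rw [dist_comm] at h2
    linarith
  obtain ⟨q', hq'Γ, hq'⟩ := hΓc.exists_infDist_eq_dist ⟨q, hq⟩ y
  have hq'p : q' ∈ projPt Γ y := ⟨hq'Γ, hq'.symm⟩
  have hxB : x ∈ Metric.closedBall x (d - ε) := Metric.mem_closedBall_self (by linarith)
  have hyB : y ∈ Metric.closedBall x (d - ε) := by
    rw [Metric.mem_closedBall, dist_comm, hxy]
  have hmain : dist p' q' ≤ D := hcon x (d - ε) hdisj x hxB y hyB p' hp' q' hq'p
  have h3 : dist q' q ≤ 2 * (C + ε) := by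
    have h5 : infDist y Γ ≤ dist y q := infDist_le_dist_of_mem hq
    have h6 : dist y q ≤ C + ε := by rw [hyq]; linarith
    have h7 : dist q' y = dist y q' := dist_comm _ _
    calc dist q' q ≤ dist q' y + dist y q := dist_triangle _ _ _
      _ ≤ 2 * (C + ε) := by rw [h7, ← hq']; linarith
  calc dist p' q ≤ dist p' q' + dist q' q := dist_triangle _ _ _
    _ ≤ D + 2 * C + 2 := by linarith

/-- let `γ : [a,b] → X` be a `D`-contracting geodesic,
`δ = 7D + 1`, and `σ = γ|[s,t]` a subsegment. If `z ∈ X` has a projection to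
`im γ` meeting `im σ`, and `B` is a closed ball centered at `z` disjoint from
`im σ`, then `diam (π_{im σ}(B)) ≤ D + 4δ`. -/
theorem proj_diam_of_meeting_subsegment {X : Type} [MetricSpace X]
    [ProperSpace X] (hgeo : GeodesicSpace X) (D : ℝ) (hD : 0 ≤ D)
    (γ : ℝ → X) (a b : ℝ) (hab : a ≤ b)
    (hγ : IsGeodesicOn γ a b) (hcon : ContractingOn γ a b D)
    (s t : ℝ) (has : a ≤ s) (hst : s ≤ t) (htb : t ≤ b)
    (z : X) (hz : (projPt (γ '' Set.Icc a b) z ∩ γ '' Set.Icc s t).Nonempty)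
    (r : ℝ) (hdisj : Disjoint (Metric.closedBall z r) (γ '' Set.Icc s t)) :
    ∀ x ∈ Metric.closedBall z r, ∀ y ∈ Metric.closedBall z r,
      ∀ p ∈ projPt (γ '' Set.Icc s t) x, ∀ q ∈ projPt (γ '' Set.Icc s t) y,
        dist p q ≤ D + 4 * (7 * D + 1) := by
  intro x hxB y hyB p hp q hq
  obtain ⟨w, hwproj, hwS⟩ := hz
  have hr0 : 0 ≤ r := le_trans dist_nonneg (Metric.mem_closedBall.mp hxB)
  have hzB : z ∈ Metric.closedBall z r := Metric.mem_closedBall_self hr0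
  have hsub : γ '' Set.Icc s t ⊆ γ '' Set.Icc a b :=
    Set.image_mono (Set.Icc_subset_Icc has htb)
  have hcont : ContinuousOn γ (Set.Icc a b) := by
    apply LipschitzOnWith.continuousOn (K := 1)
    apply LipschitzOnWith.of_dist_le_mul
    intro u hu v hv
    rw [hγ u hu v hv, Real.dist_eq]
    simp
  have hΓc : IsCompact (γ '' Set.Icc a b) := isCompact_Icc.image_of_continuousOn hcont
  have hwB : w ∉ Metric.closedBall z r := fun h => (Set.disjoint_left.mp hdisj h) hwS
  have hdisjΓ : Disjoint (Metric.closedBall z r) (γ '' Set.Icc a b) := by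
    rw [Set.disjoint_left]
    intro c hcB hcΓ
    apply hwB
    have h1 : dist z w ≤ dist z c := by
      rw [hwproj.2]
      exact infDist_le_dist_of_mem hcΓ
    have h2 : dist c z ≤ r := Metric.mem_closedBall.mp hcB
    rw [dist_comm] at h2
    rw [Metric.mem_closedBall, dist_comm]
    linarith
  obtain ⟨p', hp'Γ, hp'⟩ := hΓc.exists_infDist_eq_dist ⟨w, hwproj.1⟩ x
  obtain ⟨q', hq'Γ, hq'⟩ := hΓc.exists_infDist_eq_dist ⟨w, hwproj.1⟩ y
  have hp'proj : p' ∈ projPt (γ '' Set.Icc a b) x := ⟨hp'Γ, hp'.symm⟩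
  have hq'proj : q' ∈ projPt (γ '' Set.Icc a b) y := ⟨hq'Γ, hq'.symm⟩
  have hD1 : dist p' q' ≤ D := hcon z r hdisjΓ x hxB y hyB p' hp'proj q' hq'proj
  have hDw1 : dist w p' ≤ D := hcon z r hdisjΓ z hzB x hxB w hwproj p' hp'proj
  have hDw2 : dist w q' ≤ D := hcon z r hdisjΓ z hzB y hyB w hwproj q' hq'proj
  have hxΓ : x ∉ γ '' Set.Icc a b := Set.disjoint_left.mp hdisjΓ hxB
  have hyΓ : y ∉ γ '' Set.Icc a b := Set.disjoint_left.mp hdisjΓ hyB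
  have hxp : dist x p ≤ infDist x (γ '' Set.Icc a b) + D := by
    have h2 : infDist x (γ '' Set.Icc s t) ≤ dist x w := infDist_le_dist_of_mem hwS
    have h3 : dist x w ≤ dist x p' + dist p' w := dist_triangle _ _ _
    have h4 : dist p' w = dist w p' := dist_comm _ _
    have h5 : dist x p = infDist x (γ '' Set.Icc s t) := hp.2
    linarith [hp'.le, hp'.ge]
  have hyq : dist y q ≤ infDist y (γ '' Set.Icc a b) + D := by
    have h2 : infDist y (γ '' Set.Icc s t) ≤ dist y w := infDist_le_dist_of_mem hwS
    have h3 : dist y w ≤ dist y q' + dist q' w := dist_triangle _ _ _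
    have h4 : dist q' w = dist w q' := dist_comm _ _
    have h5 : dist y q = infDist y (γ '' Set.Icc s t) := hq.2
    linarith [hq'.le, hq'.ge]
  have key1 : dist p' p ≤ D + 2 * D + 2 :=
    almost_proj hgeo D (γ '' Set.Icc a b) hΓc hcon x hxΓ p (hsub hp.1) D hxp p' hp'proj
  have key2 : dist q' q ≤ D + 2 * D + 2 :=
    almost_proj hgeo D (γ '' Set.Icc a b) hΓc hcon y hyΓ q (hsub hq.1) D hyq q' hq'proj
  have h4 : dist p q ≤ dist p p' + dist p' q' + dist q' q := dist_triangle4 _ _ _ _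
  have h5 : dist p p' = dist p' p := dist_comm _ _
  linarith
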